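/- Let δ be the linear map on the free vector space over labeled graphs defined by δ(Γ) = Σ_{e ∈ E(Γ){non-loops}} σ(e)·Γ/e, where for an oriented edge e = (p,q) between vertices labeled p and q, σ(e) = (−1)^q if p < q and σ(e) = (−1)^{p+1} if p > q, and contraction relabels vertices by assigning min{p,q} to the merged vertex and decreasing by one all labels greater than max{p,q}. Then δ ∘ δ = 0. -/

import Mathlib

/-- A labeled graph: vertices are labeled by `Fin m` (representing labels `1, …, m`),
oriented edges are indexed by a finite set of natural numbers, with an endpoint map. -/
structure LGraph (m : ℕ) where
  E : Finset ℕ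
  ends : ℕ → Fin m × Fin m

/-- The relabeling map after contracting an edge with endpoint labels `mn < M`:
the merged vertex receives the label `mn` and every label greater than `M` decreases
by one (labels below `M` are unchanged). -/
def collapseMap {m : ℕ} (M mn : Fin (m + 2)) (v : Fin (m + 2)) : Fin (m + 1) :=
  if h : (v : ℕ) < (M : ℕ) then ⟨v, by have := M.isLt; omega⟩
  else if (v : ℕ) = (M : ℕ) then ⟨min (mn : ℕ) m, by have := Nat.min_le_right (mn : ℕ) m; omega⟩
  else ⟨(v : ℕ) - 1, by have := v.isLt; omega⟩

/-- Contraction `Γ/e`: delete the edge `e` and merge its endpoints, relabeling vertices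
so that the merged vertex gets label `min{p,q}` and labels above `max{p,q}` drop by one. -/
def contract {m : ℕ} (Γ : LGraph (m + 2)) (e : ℕ) : LGraph (m + 1) where
  E := Γ.E.erase e
  ends := fun f =>
    (collapseMap (max (Γ.ends e).1 (Γ.ends e).2) (min (Γ.ends e).1 (Γ.ends e).2) (Γ.ends f).1,
     collapseMap (max (Γ.ends e).1 (Γ.ends e).2) (min (Γ.ends e).1 (Γ.ends e).2) (Γ.ends f).2)

/-- The sign `σ(e)` of an oriented edge `e = (p, q)` (`p, q` being the 1-based labels,
i.e. `p = pq.1 + 1`, `q = pq.2 + 1`): `σ(e) = (−1)^q` if `p < q` and `(−1)^{p+1}` if `p > q`. -/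
def edgeSign {k : ℕ} (pq : Fin k × Fin k) : ℤ :=
  if pq.1 < pq.2 then (-1) ^ ((pq.2 : ℕ) + 1) else (-1) ^ (((pq.1 : ℕ) + 1) + 1)

open Classical in
/-- `δ(Γ) = Σ_{e ∈ E(Γ), e not a loop} σ(e) · Γ/e`, on a single graph. -/
noncomputable def deltaSingle {m : ℕ} (Γ : LGraph (m + 2)) : LGraph (m + 1) →₀ ℝ :=
  ∑ e ∈ Γ.E.filter (fun e => (Γ.ends e).1 ≠ (Γ.ends e).2),
    (edgeSign (Γ.ends e) : ℝ) • Finsupp.single (contract Γ e) 1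

/-- The coboundary map `δ`, extended linearly to the free vector space on labeled graphs. -/
noncomputable def delta (m : ℕ) :
    (LGraph (m + 2) →₀ ℝ) →ₗ[ℝ] (LGraph (m + 1) →₀ ℝ) :=
  Finsupp.lsum ℝ fun Γ => LinearMap.toSpanSingleton ℝ _ (deltaSingle Γ)

/- ==== auxiliary numeric layer ==== -/

def Ccol (M mn w : ℕ) : ℕ := if w < M then w else if w = M then mn else w - 1

lemma Ccol_cases (M mn w : ℕ) :
    (w < M ∧ Ccol M mn w = w) ∨ (w = M ∧ Ccol M mn w = mn) ∨ (M < w ∧ Ccol M mn w = w - 1) := by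
  unfold Ccol; split_ifs <;> omega

def expo (x y : ℕ) : ℕ := max x y + (if x < y then 1 else 0)

lemma expo_cases (x y : ℕ) : (x < y ∧ expo x y = y + 1) ∨ (y ≤ x ∧ expo x y = x) := by
  unfold expo; split_ifs <;> omega

lemma Ccol_ne_iff (x y u v : ℕ) (hxy : x ≠ y) :
    Ccol (max x y) (min x y) u ≠ Ccol (max x y) (min x y) v ↔
      u ≠ v ∧ ¬(min u v = min x y ∧ max u v = max x y) := by
  have h1 := Ccol_cases (max x y) (min x y) u
  have h2 := Ccol_cases (max x y) (min x y) v
  omega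

lemma parity_lemma (x y u v : ℕ) (hxy : x ≠ y) (huv : u ≠ v)
    (hne : ¬(min u v = min x y ∧ max u v = max x y)) :
    (expo x y + expo (Ccol (max u v) (min u v) x) (Ccol (max u v) (min u v) y)
      + (expo u v + expo (Ccol (max x y) (min x y) u) (Ccol (max x y) (min x y) v))) % 2 = 1 := by
  have h1 := Ccol_cases (max u v) (min u v) x
  have h2 := Ccol_cases (max u v) (min u v) y
  have h3 := Ccol_cases (max x y) (min x y) u
  have h4 := Ccol_cases (max x y) (min x y) v
  have e1 := expo_cases x y
  have e2 := expo_cases u v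
  have e3 := expo_cases (Ccol (max u v) (min u v) x) (Ccol (max u v) (min u v) y)
  have e4 := expo_cases (Ccol (max x y) (min x y) u) (Ccol (max x y) (min x y) v)
  omega

set_option maxHeartbeats 4000000 in
lemma Ccol_comm (X N U V w : ℕ) (hxy : N < X) (huv : V < U) :
    Ccol (max (Ccol X N U) (Ccol X N V)) (min (Ccol X N U) (Ccol X N V)) (Ccol X N w)
    = Ccol (max (Ccol U V X) (Ccol U V N)) (min (Ccol U V X) (Ccol U V N)) (Ccol U V w) := by
  have h1 := Ccol_cases U V X
  have h2 := Ccol_cases U V N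
  have h3 := Ccol_cases X N U
  have h4 := Ccol_cases X N V
  have h5 := Ccol_cases X N w
  have h6 := Ccol_cases U V w
  have h7 := Ccol_cases (max (Ccol X N U) (Ccol X N V)) (min (Ccol X N U) (Ccol X N V)) (Ccol X N w)
  have h8 := Ccol_cases (max (Ccol U V X) (Ccol U V N)) (min (Ccol U V X) (Ccol U V N)) (Ccol U V w)
  omega

lemma pair_swap (F : ℕ → ℕ) (u v : ℕ) :
    max (F (max u v)) (F (min u v)) = max (F u) (F v)
    ∧ min (F (max u v)) (F (min u v)) = min (F u) (F v) := by
  rcases le_total u v with h|h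
  · rw [Nat.max_eq_right h, Nat.min_eq_left h]; exact ⟨Nat.max_comm _ _, Nat.min_comm _ _⟩
  · rw [Nat.max_eq_left h, Nat.min_eq_right h]; exact ⟨rfl, rfl⟩

lemma Ccol_comm' (x y u v w : ℕ) (hxy : x ≠ y) (huv : u ≠ v) :
    Ccol (max (Ccol (max x y) (min x y) u) (Ccol (max x y) (min x y) v))
      (min (Ccol (max x y) (min x y) u) (Ccol (max x y) (min x y) v))
      (Ccol (max x y) (min x y) w)
    = Ccol (max (Ccol (max u v) (min u v) x) (Ccol (max u v) (min u v) y))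
      (min (Ccol (max u v) (min u v) x) (Ccol (max u v) (min u v) y))
      (Ccol (max u v) (min u v) w) := by
  have h := Ccol_comm (max x y) (min x y) (max u v) (min u v) w (by omega) (by omega)
  obtain ⟨hmax, hmin⟩ := pair_swap (Ccol (max x y) (min x y)) u v
  obtain ⟨hmax', hmin'⟩ := pair_swap (Ccol (max u v) (min u v)) x y
  rw [hmax, hmin, hmax', hmin'] at h
  exact h

/- ==== Fin layer ==== -/

lemma fin_val_max {n : ℕ} (a b : Fin n) : ((max a b : Fin n) : ℕ) = max (a : ℕ) (b : ℕ) := by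
  rcases le_total a b with h|h
  · rw [max_eq_right h, Nat.max_eq_right h]
  · rw [max_eq_left h, Nat.max_eq_left h]

lemma fin_val_min {n : ℕ} (a b : Fin n) : ((min a b : Fin n) : ℕ) = min (a : ℕ) (b : ℕ) := by
  rcases le_total a b with h|h
  · rw [min_eq_left h, Nat.min_eq_left h]
  · rw [min_eq_right h, Nat.min_eq_right h]

lemma coe_collapseMap {m : ℕ} (M mn : Fin (m + 2)) (h : (mn : ℕ) < (M : ℕ)) (v : Fin (m + 2)) :
    ((collapseMap M mn v : Fin (m + 1)) : ℕ) = Ccol (M : ℕ) (mn : ℕ) (v : ℕ) := by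
  have hm : (mn : ℕ) ≤ m := by have := M.isLt; omega
  unfold collapseMap Ccol
  split_ifs <;> simp [Nat.min_eq_left hm]

lemma edgeSign_eq {k : ℕ} (pq : Fin k × Fin k) :
    edgeSign pq = (-1) ^ (expo (pq.1 : ℕ) (pq.2 : ℕ)) := by
  unfold edgeSign expo
  rcases lt_or_ge pq.1 pq.2 with h|h
  · have h' : (pq.1 : ℕ) < (pq.2 : ℕ) := h
    rw [if_pos h, if_pos h', Nat.max_eq_right h'.le]
  · have h' : (pq.2 : ℕ) ≤ (pq.1 : ℕ) := h
    rw [if_neg (not_lt.mpr h), if_neg (not_lt.mpr h'), Nat.max_eq_left h', Nat.add_zero,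
      pow_succ, pow_succ, mul_neg_one, mul_neg_one, neg_neg]
    norm_num

lemma neg_one_pow_odd_sum (a b : ℕ) (h : (a + b) % 2 = 1) : ((-1 : ℝ) ^ a) = -((-1 : ℝ) ^ b) := by
  rcases Nat.even_or_odd a with ha|ha <;> rcases Nat.even_or_odd b with hb|hb
  · exfalso; rw [Nat.even_iff] at ha hb; omega
  · simp [ha.neg_one_pow, hb.neg_one_pow]
  · simp [ha.neg_one_pow, hb.neg_one_pow]
  · exfalso; rw [Nat.odd_iff] at ha hb; omega

/- ==== graph layer ==== -/

lemma contract_ends_val {m : ℕ} (Γ : LGraph (m + 2)) (e f : ℕ)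
    (he : ((Γ.ends e).1 : ℕ) ≠ ((Γ.ends e).2 : ℕ)) :
    ((((contract Γ e).ends f).1 : ℕ)
        = Ccol (max ((Γ.ends e).1 : ℕ) ((Γ.ends e).2 : ℕ))
            (min ((Γ.ends e).1 : ℕ) ((Γ.ends e).2 : ℕ)) ((Γ.ends f).1 : ℕ))
    ∧ ((((contract Γ e).ends f).2 : ℕ)
        = Ccol (max ((Γ.ends e).1 : ℕ) ((Γ.ends e).2 : ℕ))
            (min ((Γ.ends e).1 : ℕ) ((Γ.ends e).2 : ℕ)) ((Γ.ends f).2 : ℕ)) := by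
  have h1 : ((min (Γ.ends e).1 (Γ.ends e).2 : Fin (m + 2)) : ℕ)
      < ((max (Γ.ends e).1 (Γ.ends e).2 : Fin (m + 2)) : ℕ) := by
    rw [fin_val_min, fin_val_max]; omega
  constructor
  · show ((collapseMap _ _ _ : Fin (m + 1)) : ℕ) = _
    rw [coe_collapseMap _ _ h1, fin_val_min, fin_val_max]
  · show ((collapseMap _ _ _ : Fin (m + 1)) : ℕ) = _
    rw [coe_collapseMap _ _ h1, fin_val_min, fin_val_max]

lemma nonloop_contract_iff {m : ℕ} (Γ : LGraph (m + 2)) (e f : ℕ)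
    (he : ((Γ.ends e).1 : ℕ) ≠ ((Γ.ends e).2 : ℕ)) :
    ((contract Γ e).ends f).1 ≠ ((contract Γ e).ends f).2 ↔
      (((Γ.ends f).1 : ℕ) ≠ ((Γ.ends f).2 : ℕ) ∧
        ¬(min ((Γ.ends f).1 : ℕ) ((Γ.ends f).2 : ℕ)
            = min ((Γ.ends e).1 : ℕ) ((Γ.ends e).2 : ℕ) ∧
          max ((Γ.ends f).1 : ℕ) ((Γ.ends f).2 : ℕ)
            = max ((Γ.ends e).1 : ℕ) ((Γ.ends e).2 : ℕ))) := by
  obtain ⟨h1, h2⟩ := contract_ends_val Γ e f he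
  rw [← Fin.val_ne_iff, h1, h2]
  exact Ccol_ne_iff _ _ _ _ he

lemma contract_comm {m : ℕ} (Γ : LGraph (m + 3)) (e f : ℕ)
    (he : ((Γ.ends e).1 : ℕ) ≠ ((Γ.ends e).2 : ℕ))
    (hf : ((Γ.ends f).1 : ℕ) ≠ ((Γ.ends f).2 : ℕ))
    (hef : ((contract Γ e).ends f).1 ≠ ((contract Γ e).ends f).2)
    (hfe : ((contract Γ f).ends e).1 ≠ ((contract Γ f).ends e).2) :
    contract (contract Γ e) f = contract (contract Γ f) e := by
  have hef' : (((contract Γ e).ends f).1 : ℕ) ≠ (((contract Γ e).ends f).2 : ℕ) :=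
    Fin.val_ne_iff.mpr hef
  have hfe' : (((contract Γ f).ends e).1 : ℕ) ≠ (((contract Γ f).ends e).2 : ℕ) :=
    Fin.val_ne_iff.mpr hfe
  obtain ⟨he1, he2⟩ := contract_ends_val Γ e f he
  obtain ⟨hf1, hf2⟩ := contract_ends_val Γ f e hf
  unfold contract
  congr 1
  · exact Finset.erase_right_comm
  · funext g
    obtain ⟨heg1, heg2⟩ := contract_ends_val Γ e g he
    obtain ⟨hfg1, hfg2⟩ := contract_ends_val Γ f g hf
    obtain ⟨L1, L2⟩ := contract_ends_val (contract Γ e) f g hef'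
    obtain ⟨R1, R2⟩ := contract_ends_val (contract Γ f) e g hfe'
    refine Prod.ext ?_ ?_
    · apply Fin.val_injective
      show (((contract (contract Γ e) f).ends g).1 : ℕ)
        = (((contract (contract Γ f) e).ends g).1 : ℕ)
      rw [L1, R1, he1, he2, hf1, hf2, heg1, hfg1]
      exact Ccol_comm' _ _ _ _ _ he hf
    · apply Fin.val_injective
      show (((contract (contract Γ e) f).ends g).2 : ℕ)
        = (((contract (contract Γ f) e).ends g).2 : ℕ)
      rw [L2, R2, he1, he2, hf1, hf2, heg2, hfg2]
      exact Ccol_comm' _ _ _ _ _ he hf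

lemma sign_anti {m : ℕ} (Γ : LGraph (m + 3)) (e f : ℕ)
    (he : ((Γ.ends e).1 : ℕ) ≠ ((Γ.ends e).2 : ℕ))
    (hf : ((Γ.ends f).1 : ℕ) ≠ ((Γ.ends f).2 : ℕ))
    (hne : ¬(min ((Γ.ends f).1 : ℕ) ((Γ.ends f).2 : ℕ)
            = min ((Γ.ends e).1 : ℕ) ((Γ.ends e).2 : ℕ) ∧
          max ((Γ.ends f).1 : ℕ) ((Γ.ends f).2 : ℕ)
            = max ((Γ.ends e).1 : ℕ) ((Γ.ends e).2 : ℕ))) :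
    ((edgeSign (Γ.ends e) : ℤ) : ℝ) * ((edgeSign ((contract Γ e).ends f) : ℤ) : ℝ)
      = -(((edgeSign (Γ.ends f) : ℤ) : ℝ) * ((edgeSign ((contract Γ f).ends e) : ℤ) : ℝ)) := by
  obtain ⟨a1, a2⟩ := contract_ends_val Γ e f he
  obtain ⟨b1, b2⟩ := contract_ends_val Γ f e hf
  rw [edgeSign_eq, edgeSign_eq, edgeSign_eq, edgeSign_eq, a1, a2, b1, b2]
  push_cast
  rw [← pow_add, ← pow_add]
  apply neg_one_pow_odd_sum
  have := parity_lemma ((Γ.ends e).1 : ℕ) ((Γ.ends e).2 : ℕ)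
    ((Γ.ends f).1 : ℕ) ((Γ.ends f).2 : ℕ) he hf hne
  omega

/- ==== main ==== -/

lemma delta_deltaSingle_zero {m : ℕ} (Γ : LGraph (m + 3)) :
    delta m (deltaSingle Γ) = 0 := by
  classical
  rw [deltaSingle, map_sum]
  have step : ∀ e ∈ Γ.E.filter (fun e => (Γ.ends e).1 ≠ (Γ.ends e).2),
      delta m ((edgeSign (Γ.ends e) : ℝ) • Finsupp.single (contract Γ e) 1)
        = ∑ f ∈ (contract Γ e).E.filter
            (fun f => ((contract Γ e).ends f).1 ≠ ((contract Γ e).ends f).2),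
            (((edgeSign (Γ.ends e) : ℤ) : ℝ) * ((edgeSign ((contract Γ e).ends f) : ℤ) : ℝ)) •
              Finsupp.single (contract (contract Γ e) f) (1 : ℝ) := by
    intro e _
    rw [map_smul, delta, Finsupp.lsum_single, LinearMap.toSpanSingleton_apply, one_smul,
      deltaSingle, Finset.smul_sum]
    exact Finset.sum_congr rfl fun f _ => smul_smul _ _ _
  rw [Finset.sum_congr rfl step, Finset.sum_sigma']
  refine Finset.sum_involution (fun a _ => ⟨a.2, a.1⟩) ?_ ?_ ?_ ?_
  · rintro ⟨e, f⟩ ha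
    simp only [Finset.mem_sigma, Finset.mem_filter, Finset.mem_erase] at ha
    obtain ⟨⟨heE, henl⟩, hfmem, hcnl⟩ := ha
    have hfE : f ∈ Γ.E ∧ f ≠ e := by
      have : f ∈ Γ.E.erase e := hfmem
      exact ⟨Finset.mem_of_mem_erase this, Finset.ne_of_mem_erase this⟩
    have he' : ((Γ.ends e).1 : ℕ) ≠ ((Γ.ends e).2 : ℕ) := Fin.val_ne_iff.mpr henl
    obtain ⟨hf', hpairs⟩ := (nonloop_contract_iff Γ e f he').mp hcnl
    have hfnl : (Γ.ends f).1 ≠ (Γ.ends f).2 := Fin.val_ne_iff.mp hf'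
    have hpairs' : ¬(min ((Γ.ends e).1 : ℕ) ((Γ.ends e).2 : ℕ)
            = min ((Γ.ends f).1 : ℕ) ((Γ.ends f).2 : ℕ) ∧
          max ((Γ.ends e).1 : ℕ) ((Γ.ends e).2 : ℕ)
            = max ((Γ.ends f).1 : ℕ) ((Γ.ends f).2 : ℕ)) := by
      intro ⟨u, v⟩; exact hpairs ⟨u.symm, v.symm⟩
    have hfe : ((contract Γ f).ends e).1 ≠ ((contract Γ f).ends e).2 :=
      (nonloop_contract_iff Γ f e hf').mpr ⟨he', hpairs'⟩
    show (_ • _) + (_ • _) = 0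
    rw [contract_comm Γ e f he' hf' hcnl hfe, sign_anti Γ e f he' hf' hpairs, ← add_smul,
      neg_add_cancel, zero_smul]
  · rintro ⟨e, f⟩ ha _
    simp only [Finset.mem_sigma, Finset.mem_filter, Finset.mem_erase] at ha
    obtain ⟨_, hfmem, _⟩ := ha
    have hfe : f ≠ e := Finset.ne_of_mem_erase hfmem
    intro h
    exact hfe (congrArg Sigma.fst h)
  · rintro ⟨e, f⟩ ha
    simp only [Finset.mem_sigma, Finset.mem_filter, Finset.mem_erase] at ha
    obtain ⟨⟨heE, henl⟩, hfmem, hcnl⟩ := ha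
    have hfE : f ∈ Γ.E := Finset.mem_of_mem_erase hfmem
    have hfe : f ≠ e := Finset.ne_of_mem_erase hfmem
    have he' : ((Γ.ends e).1 : ℕ) ≠ ((Γ.ends e).2 : ℕ) := Fin.val_ne_iff.mpr henl
    obtain ⟨hf', hpairs⟩ := (nonloop_contract_iff Γ e f he').mp hcnl
    have hpairs' : ¬(min ((Γ.ends e).1 : ℕ) ((Γ.ends e).2 : ℕ)
            = min ((Γ.ends f).1 : ℕ) ((Γ.ends f).2 : ℕ) ∧
          max ((Γ.ends e).1 : ℕ) ((Γ.ends e).2 : ℕ)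
            = max ((Γ.ends f).1 : ℕ) ((Γ.ends f).2 : ℕ)) := by
      intro ⟨u, v⟩; exact hpairs ⟨u.symm, v.symm⟩
    refine Finset.mem_sigma.mpr ⟨Finset.mem_filter.mpr ⟨hfE, Fin.val_ne_iff.mp hf'⟩,
      Finset.mem_filter.mpr ⟨show e ∈ Γ.E.erase f from Finset.mem_erase.mpr ⟨Ne.symm hfe, heE⟩,
        (nonloop_contract_iff Γ f e hf').mpr ⟨he', hpairs'⟩⟩⟩
  · rintro ⟨e, f⟩ _
    rfl


/-- the coboundary map satisfies `δ ∘ δ = 0`. -/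
theorem stmt_5 (m : ℕ) (x : LGraph (m + 3) →₀ ℝ) :
    delta m (delta (m + 1) x) = 0 := by
  have h1 : delta (m + 1) x = x.sum fun Γ r => r • deltaSingle Γ := by
    rw [delta, Finsupp.lsum_apply]
    exact Finsupp.sum_congr fun Γ _ => rfl
  rw [h1, _root_.map_finsuppSum]
  have h2 : ∀ Γ ∈ x.support, ∀ (r : ℝ), delta m (r • deltaSingle Γ) = 0 := by
    intro Γ _ r
    rw [map_smul, delta_deltaSingle_zero, smul_zero]
  calc x.sum (fun Γ r => delta m (r • deltaSingle Γ))
      = x.sum (fun _ _ => (0 : LGraph (m + 1) →₀ ℝ)) :=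
        Finsupp.sum_congr fun Γ hΓ => h2 Γ hΓ _
    _ = 0 := Finset.sum_const_zero
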